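/- Let s = 2q with q ≥ 2 and equip the even dihedral system I₂(2q) with multiplicity values k₁ on the orbit of even-indexed reflections and k₂ on odd-indexed reflections. Then for m ≥ 1: if g is an even-indexed reflection (m odd) or an even rotation (m even), c_m(g) = (q^{m−1}/2)[(k₁+k₂)^m + (k₁−k₂)^m]; if g is an odd-indexed reflection (m odd) or an odd rotation (m even), c_m(g) = (q^{m−1}/2)[(k₁+k₂)^m − (k₁−k₂)^m]. -/

import Mathlib

attribute [local instance] Classical.propDecidable

/-- `c_m(g)` for the even dihedral group `D₂(2q)` with multiplicity `k₁` on the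
even-indexed reflections and `k₂` on the odd-indexed ones. -/
noncomputable def cdih2 (q : ℕ) [NeZero (2 * q)] (k₁ k₂ : ℂ) (m : ℕ)
    (g : DihedralGroup (2 * q)) : ℂ :=
  ∑ f : Fin m → ZMod (2 * q),
    if (List.ofFn fun i => DihedralGroup.sr (f i)).prod = g
    then (List.ofFn fun i => if Even (f i).val then k₁ else k₂).prod else 0

section aux

variable (q : ℕ) [NeZero (2 * q)]

/-- parity homomorphism -/
noncomputable def parDih : ZMod (2 * q) →+* ZMod 2 := ZMod.castHom (Dvd.intro q rfl) (ZMod 2)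

lemma even_val_iff_par (x : ZMod (2 * q)) : Even x.val ↔ parDih q x = 0 := by
  rw [parDih, ZMod.castHom_apply, ← ZMod.natCast_val, ZMod.natCast_eq_zero_iff]
  exact Nat.even_iff.trans Nat.dvd_iff_mod_eq_zero.symm

lemma zmod2_add_eq_zero (x y : ZMod 2) : x + y = 0 ↔ x = y := by revert x y; decide

lemma zmod2_sub_eq_zero (x y : ZMod 2) : x - y = 0 ↔ x = y := by revert x y; decide

lemma even_val_add_iff (a j : ZMod (2 * q)) :
    Even (a + j).val ↔ (Even a.val ↔ Even j.val) := by
  rw [even_val_iff_par, map_add, zmod2_add_eq_zero, even_val_iff_par, even_val_iff_par]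
  generalize (parDih q) a = u
  generalize (parDih q) j = v
  revert u v; decide

lemma even_val_sub_iff (a j : ZMod (2 * q)) :
    Even (j - a).val ↔ (Even a.val ↔ Even j.val) := by
  rw [even_val_iff_par, map_sub, zmod2_sub_eq_zero, even_val_iff_par, even_val_iff_par]
  generalize (parDih q) a = u
  generalize (parDih q) j = v
  revert u v; decide

lemma sum_range_two_mul (u v : ℂ) (n : ℕ) :
    ∑ i ∈ Finset.range (2 * n), (if Even i then u else v) = n * (u + v) := by
  induction n with
  | zero => simp
  | succ n ih =>
      have h : 2 * (n + 1) = 2 * n + 1 + 1 := by ring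
      rw [h, Finset.sum_range_succ, Finset.sum_range_succ, ih]
      have h1 : ¬ Even (2 * n + 1) := by simp [Nat.even_add_one]
      have h2 : Even (2 * n) := even_two_mul n
      simp only [h1, h2, if_true, if_false]
      push_cast
      ring

lemma sum_parity (u v : ℂ) :
    ∑ a : ZMod (2 * q), (if Even a.val then u else v) = q * (u + v) := by
  classical
  rw [← sum_range_two_mul u v q]
  refine Finset.sum_nbij' (fun a => a.val) (fun i => (i : ZMod (2 * q))) ?_ ?_ ?_ ?_ ?_
  · intro a _; exact Finset.mem_range.mpr (ZMod.val_lt a)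
  · intro i _; exact Finset.mem_univ _
  · intro a _; exact ZMod.natCast_rightInverse a
  · intro i hi; exact ZMod.val_cast_of_lt (Finset.mem_range.mp hi)
  · intro a _; rfl

lemma cdih2_succ (k₁ k₂ : ℂ) (m : ℕ) (g : DihedralGroup (2 * q)) :
    cdih2 q k₁ k₂ (m + 1) g =
      ∑ a : ZMod (2 * q), (if Even a.val then k₁ else k₂) *
        cdih2 q k₁ k₂ m (DihedralGroup.sr a * g) := by
  classical
  unfold cdih2
  rw [← (Fin.consEquiv (fun _ : Fin (m+1) => ZMod (2 * q))).sum_comp]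
  rw [Fintype.sum_prod_type]
  refine Finset.sum_congr rfl fun a _ => ?_
  rw [Finset.mul_sum]
  refine Finset.sum_congr rfl fun f _ => ?_
  have hl1 : (List.ofFn fun i : Fin (m+1) =>
        DihedralGroup.sr ((Fin.cons a f : Fin (m+1) → ZMod (2*q)) i)).prod
      = DihedralGroup.sr a * (List.ofFn fun i : Fin m => DihedralGroup.sr (f i)).prod := by
    rw [List.ofFn_succ]
    simp [List.prod_cons]
  have hl2 : (List.ofFn fun i : Fin (m+1) =>
        if Even ((Fin.cons a f : Fin (m+1) → ZMod (2*q)) i).val then k₁ else k₂).prod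
      = (if Even a.val then k₁ else k₂) *
        (List.ofFn fun i : Fin m => if Even (f i).val then k₁ else k₂).prod := by
    rw [List.ofFn_succ]
    simp [List.prod_cons]
  have hcond : ((List.ofFn fun i : Fin (m+1) =>
        DihedralGroup.sr ((Fin.cons a f : Fin (m+1) → ZMod (2*q)) i)).prod = g)
      ↔ ((List.ofFn fun i : Fin m => DihedralGroup.sr (f i)).prod = DihedralGroup.sr a * g) := by
    rw [hl1]
    constructor
    · rintro rfl
      rw [← mul_assoc, DihedralGroup.sr_mul_sr, sub_self, ← DihedralGroup.one_def, one_mul]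
    · intro h
      rw [h, ← mul_assoc, DihedralGroup.sr_mul_sr, sub_self, ← DihedralGroup.one_def, one_mul]
  rw [mul_ite, mul_zero]
  simp only [Fin.consEquiv_apply]
  rw [if_congr hcond rfl rfl, hl2]

lemma cdih2_zero (k₁ k₂ : ℂ) (g : DihedralGroup (2 * q)) :
    cdih2 q k₁ k₂ 0 g = if g = 1 then 1 else 0 := by
  unfold cdih2
  rw [Fintype.sum_subsingleton _ (fun i : Fin 0 => (0 : ZMod (2 * q)))]
  simp [List.ofFn_zero, eq_comm]

end aux

lemma dih_key (q : ℕ) [NeZero (2 * q)] (k₁ k₂ : ℂ) :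
    ∀ m, 1 ≤ m → ∀ j : ZMod (2 * q),
    (Odd m → cdih2 q k₁ k₂ m (DihedralGroup.sr j)
      = (q : ℂ) ^ (m - 1) / 2 *
        (if Even j.val then (k₁ + k₂) ^ m + (k₁ - k₂) ^ m
         else (k₁ + k₂) ^ m - (k₁ - k₂) ^ m)) ∧
    (Even m → cdih2 q k₁ k₂ m (DihedralGroup.r j)
      = (q : ℂ) ^ (m - 1) / 2 *
        (if Even j.val then (k₁ + k₂) ^ m + (k₁ - k₂) ^ m
         else (k₁ + k₂) ^ m - (k₁ - k₂) ^ m)) := by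
  classical
  refine Nat.le_induction ?_ ?_
  · intro j
    constructor
    · intro _
      have h1 : cdih2 q k₁ k₂ 1 (DihedralGroup.sr j) = if Even j.val then k₁ else k₂ := by
        rw [cdih2_succ]
        have hpt : ∀ a : ZMod (2 * q),
            (if Even a.val then k₁ else k₂) *
              cdih2 q k₁ k₂ 0 (DihedralGroup.sr a * DihedralGroup.sr j)
            = if a = j then (if Even a.val then k₁ else k₂) else 0 := by
          intro a
          rw [cdih2_zero, DihedralGroup.sr_mul_sr]
          have hr : (DihedralGroup.r (j - a) = 1) ↔ a = j := by
            rw [DihedralGroup.one_def]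
            rw [DihedralGroup.r.injEq, sub_eq_zero, eq_comm]
          by_cases h : a = j
          · have : DihedralGroup.r (j - a) = 1 := hr.mpr h
            simp [this, h, ← DihedralGroup.one_def]
          · have : ¬ DihedralGroup.r (j - a) = 1 := fun hh => h (hr.mp hh)
            simp [this, h, ← DihedralGroup.one_def]
        rw [Finset.sum_congr rfl fun a _ => hpt a,
          Finset.sum_ite_eq' Finset.univ j (fun a => if Even a.val then k₁ else k₂)]
        simp
      rw [h1]
      by_cases hj : Even j.val <;> simp [hj] <;> ring
    · intro h
      exact absurd h (by simp)
  · intro m hm ih j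
    have hAux : ∀ (g : ZMod (2*q) → DihedralGroup (2*q))
        (_ : ∀ a, cdih2 q k₁ k₂ m (g a)
          = (q : ℂ) ^ (m - 1) / 2 *
            (if (Even a.val ↔ Even j.val) then (k₁ + k₂) ^ m + (k₁ - k₂) ^ m
             else (k₁ + k₂) ^ m - (k₁ - k₂) ^ m)),
        ∑ a : ZMod (2 * q), (if Even a.val then k₁ else k₂) * cdih2 q k₁ k₂ m (g a)
        = (q : ℂ) ^ (m + 1 - 1) / 2 *
          (if Even j.val then (k₁ + k₂) ^ (m+1) + (k₁ - k₂) ^ (m+1)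
           else (k₁ + k₂) ^ (m+1) - (k₁ - k₂) ^ (m+1)) := by
      intro g hg
      have hq1 : (q : ℂ) ^ (m + 1 - 1) = (q : ℂ) ^ (m - 1) * q := by
        rw [Nat.add_sub_cancel, ← pow_succ, Nat.sub_add_cancel hm]
      by_cases hj : Even j.val
      · have hterm : ∀ a : ZMod (2 * q),
            (if Even a.val then k₁ else k₂) * cdih2 q k₁ k₂ m (g a)
            = if Even a.val
              then k₁ * ((q : ℂ) ^ (m - 1) / 2 * ((k₁ + k₂) ^ m + (k₁ - k₂) ^ m))
              else k₂ * ((q : ℂ) ^ (m - 1) / 2 * ((k₁ + k₂) ^ m - (k₁ - k₂) ^ m)) := by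
          intro a
          rw [hg a]
          by_cases ha : Even a.val <;> simp [ha, hj]
        rw [Finset.sum_congr rfl (fun a _ => hterm a), sum_parity, hq1]
        simp only [hj, if_true, pow_succ]
        ring
      · have hterm : ∀ a : ZMod (2 * q),
            (if Even a.val then k₁ else k₂) * cdih2 q k₁ k₂ m (g a)
            = if Even a.val
              then k₁ * ((q : ℂ) ^ (m - 1) / 2 * ((k₁ + k₂) ^ m - (k₁ - k₂) ^ m))
              else k₂ * ((q : ℂ) ^ (m - 1) / 2 * ((k₁ + k₂) ^ m + (k₁ - k₂) ^ m)) := by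
          intro a
          rw [hg a]
          by_cases ha : Even a.val <;> simp [ha, hj]
        rw [Finset.sum_congr rfl (fun a _ => hterm a), sum_parity, hq1]
        simp only [hj, if_false, pow_succ]
        ring
    constructor
    · intro hodd
      have hev : Even m := by
        rcases hodd with ⟨t, ht⟩
        exact ⟨t, by omega⟩
      rw [cdih2_succ]
      refine hAux (fun a => DihedralGroup.sr a * DihedralGroup.sr j) (fun a => ?_)
      rw [DihedralGroup.sr_mul_sr, (ih (j - a)).2 hev]
      simp only [even_val_sub_iff]
    · intro hev
      have hodd : Odd m := by
        rcases hev with ⟨t, ht⟩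
        exact ⟨t - 1, by omega⟩
      rw [cdih2_succ]
      refine hAux (fun a => DihedralGroup.sr a * DihedralGroup.r j) (fun a => ?_)
      rw [DihedralGroup.sr_mul_r, (ih (a + j)).1 hodd]
      simp only [even_val_add_iff]

/-- In the even dihedral system `I₂(2q)` with multiplicities `k₁, k₂`: for `m ≥ 1`,
`c_m(g) = (q^{m−1}/2)[(k₁+k₂)^m + (k₁−k₂)^m]` when `g` is an even-indexed
reflection (`m` odd) or an even rotation (`m` even), and
`c_m(g) = (q^{m−1}/2)[(k₁+k₂)^m − (k₁−k₂)^m]` when `g` is an odd-indexed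
reflection (`m` odd) or an odd rotation (`m` even). -/
theorem stmt11 (q : ℕ) [NeZero (2 * q)] (hq : 2 ≤ q) (k₁ k₂ : ℂ) (m : ℕ) (hm : 1 ≤ m)
    (j : ZMod (2 * q)) :
    (Even j.val → Odd m →
      cdih2 q k₁ k₂ m (DihedralGroup.sr j)
        = (q : ℂ) ^ (m - 1) / 2 * ((k₁ + k₂) ^ m + (k₁ - k₂) ^ m)) ∧
    (Even j.val → Even m →
      cdih2 q k₁ k₂ m (DihedralGroup.r j)
        = (q : ℂ) ^ (m - 1) / 2 * ((k₁ + k₂) ^ m + (k₁ - k₂) ^ m)) ∧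
    (Odd j.val → Odd m →
      cdih2 q k₁ k₂ m (DihedralGroup.sr j)
        = (q : ℂ) ^ (m - 1) / 2 * ((k₁ + k₂) ^ m - (k₁ - k₂) ^ m)) ∧
    (Odd j.val → Even m →
      cdih2 q k₁ k₂ m (DihedralGroup.r j)
        = (q : ℂ) ^ (m - 1) / 2 * ((k₁ + k₂) ^ m - (k₁ - k₂) ^ m)) := by
  have key := dih_key q k₁ k₂ m hm j
  refine ⟨fun hj hodd => ?_, fun hj hev => ?_, fun hj hodd => ?_, fun hj hev => ?_⟩
  · rw [key.1 hodd, if_pos hj]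
  · rw [key.2 hev, if_pos hj]
  · rw [key.1 hodd, if_neg (Nat.not_even_iff_odd.mpr hj)]
  · rw [key.2 hev, if_neg (Nat.not_even_iff_odd.mpr hj)]
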